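/- Let F be a field, q ∈ F, and d ∈ ℕ. Then the d + 1 functions n ↦ B(n + j, d), for j = 0, 1, …, d, form a basis of the F-vector space {f : ℕ → F | 𝔇_d f = 0} of Gaussian polynomial functions of degree at most d. In particular, every Gaussian polynomial function of degree at most d is a unique F-linear combination of shifted q-binomial coefficients. -/
import Mathlib


/-- The operator `(D_j f)(n) = f(n+1) − q^j·f(n)`. -/
def Dop {R : Type*} [CommRing R] (q : R) (j : ℕ) (f : ℕ → R) : ℕ → R :=
  fun n => f (n + 1) - q ^ j * f n

/-- The operator `𝔇_d = D_0 ∘ D_1 ∘ ⋯ ∘ D_d`; a function `f : ℕ → R` is a Gaussian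
polynomial function of degree at most `d` if `𝔇_d f = 0`. -/
def Dfull {R : Type*} [CommRing R] (q : R) : ℕ → (ℕ → R) → (ℕ → R)
  | 0 => Dop q 0
  | d + 1 => Dfull q d ∘ Dop q (d + 1)

/-- The `q`-binomial coefficients `B(n, k)`, defined by `B(n, 0) = 1`, `B(0, k+1) = 0`,
and `B(n+1, k+1) = B(n, k) + q^{k+1}·B(n, k+1)`. -/
def qBinom {R : Type*} [CommRing R] (q : R) : ℕ → ℕ → R
  | _, 0 => 1
  | 0, _ + 1 => 0
  | n + 1, k + 1 => qBinom q n k + q ^ (k + 1) * qBinom q n (k + 1)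

section Aux
variable {F : Type*} [Field F] (q : F)

lemma qBinom_zero_right (n : ℕ) : qBinom q n 0 = 1 := by cases n <;> rfl

lemma qBinom_succ_succ (n k : ℕ) :
    qBinom q (n + 1) (k + 1) = qBinom q n k + q ^ (k + 1) * qBinom q n (k + 1) := rfl

lemma qBinom_eq_zero : ∀ {n k : ℕ}, n < k → qBinom q n k = 0
  | 0, _ + 1, _ => rfl
  | n + 1, k + 1, h => by
    rw [qBinom_succ_succ, qBinom_eq_zero (by omega), qBinom_eq_zero (by omega)]
    ring

lemma qBinom_self : ∀ n, qBinom q n n = 1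
  | 0 => rfl
  | n + 1 => by rw [qBinom_succ_succ, qBinom_self n, qBinom_eq_zero q (by omega)]; ring

lemma Dop_add (j : ℕ) (f g : ℕ → F) : Dop q j (f + g) = Dop q j f + Dop q j g := by
  funext n; simp [Dop]; ring

lemma Dop_smul (j : ℕ) (a : F) (f : ℕ → F) : Dop q j (a • f) = a • Dop q j f := by
  funext n; simp [Dop, smul_eq_mul]; ring

lemma Dfull_add : ∀ (d : ℕ) (f g : ℕ → F), Dfull q d (f + g) = Dfull q d f + Dfull q d g
  | 0, f, g => Dop_add q 0 f g
  | d + 1, f, g => by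
    show Dfull q d (Dop q (d + 1) (f + g)) = _
    rw [Dop_add, Dfull_add d]; rfl

lemma Dfull_smul : ∀ (d : ℕ) (a : F) (f : ℕ → F), Dfull q d (a • f) = a • Dfull q d f
  | 0, a, f => Dop_smul q 0 a f
  | d + 1, a, f => by
    show Dfull q d (Dop q (d + 1) (a • f)) = _
    rw [Dop_smul, Dfull_smul d]; rfl

/-- `Dfull` as a linear map. -/
def DL (d : ℕ) : (ℕ → F) →ₗ[F] (ℕ → F) where
  toFun := Dfull q d
  map_add' := Dfull_add q d
  map_smul' := Dfull_smul q d

lemma DL_apply (d : ℕ) (f : ℕ → F) : DL q d f = Dfull q d f := rfl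

lemma Dfull_shift : ∀ (d : ℕ) (f : ℕ → F),
    Dfull q d (fun n => f (n + 1)) = fun n => Dfull q d f (n + 1)
  | 0, f => rfl
  | d + 1, f => by
    show Dfull q d (Dop q (d + 1) (fun n => f (n + 1))) = _
    have h1 : Dop q (d + 1) (fun n => f (n + 1)) = fun n => Dop q (d + 1) f (n + 1) := rfl
    rw [h1, Dfull_shift d]
    rfl

lemma Dfull_shiftj (d : ℕ) : ∀ (j : ℕ) (f : ℕ → F), Dfull q d f = 0 →
    Dfull q d (fun n => f (n + j)) = 0
  | 0, f, h => by simpa using h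
  | j + 1, f, h => by
    have h1 : Dfull q d (fun n => f (n + 1)) = 0 := by
      rw [Dfull_shift]; funext n; rw [h]; rfl
    have := Dfull_shiftj d j (fun n => f (n + 1)) h1
    simpa [add_assoc, add_comm 1 j] using this

lemma Dop_qBinom (k : ℕ) :
    Dop q (k + 1) (fun n => qBinom q n (k + 1)) = fun n => qBinom q n k := by
  funext n; simp only [Dop, qBinom_succ_succ]; ring

lemma Dfull_qBinom : ∀ d : ℕ, Dfull q d (fun n => qBinom q n d) = 0
  | 0 => by funext n; simp [Dfull, Dop, qBinom_zero_right]
  | d + 1 => by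
    show Dfull q d (Dop q (d + 1) (fun n => qBinom q n (d + 1))) = 0
    rw [Dop_qBinom]; exact Dfull_qBinom d

lemma kernel_zero : ∀ (d : ℕ) (f : ℕ → F), Dfull q d f = 0 → (∀ i, i ≤ d → f i = 0) → f = 0
  | 0, f, h, h0 => by
    have hn : ∀ n, f n = 0 := by
      intro n
      induction n with
      | zero => exact h0 0 le_rfl
      | succ n ih =>
        have := congrFun h n
        simp only [Dfull, Dop, pow_zero, one_mul, Pi.zero_apply, sub_eq_zero] at this
        rw [this, ih]
    funext n; exact hn n
  | d + 1, f, h, h0 => by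
    have hg : Dfull q d (Dop q (d + 1) f) = 0 := h
    have hg0 : ∀ i, i ≤ d → Dop q (d + 1) f i = 0 := by
      intro i hi
      simp only [Dop, h0 i (by omega), h0 (i + 1) (by omega), mul_zero, sub_zero]
    have hzero := kernel_zero d _ hg hg0
    have hn : ∀ n, f n = 0 := by
      intro n
      induction n with
      | zero => exact h0 0 (by omega)
      | succ n ih =>
        have := congrFun hzero n
        simp only [Dop, Pi.zero_apply, sub_eq_zero] at this
        rw [this, ih, mul_zero]
    funext n; exact hn n

lemma key (d : ℕ) (c : Fin (d + 1) → F)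
    (h : ∀ i : Fin (d + 1), ∑ j : Fin (d + 1), c j * qBinom q ((i : ℕ) + (j : ℕ)) d = 0) :
    c = 0 := by
  have h' : ∀ i : ℕ, i ≤ d → ∑ j : Fin (d + 1), c j * qBinom q (i + (j : ℕ)) d = 0 := by
    intro i hi
    simpa using h ⟨i, by omega⟩
  have aux : ∀ i : ℕ, i ≤ d → ∀ j : Fin (d + 1), (j : ℕ) + i = d → c j = 0 := by
    intro i
    induction i using Nat.strong_induction_on with
    | _ i IH =>
      intro hi j hji
      have hsum := h' i hi
      rw [Finset.sum_eq_single j] at hsum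
      · rw [show i + (j : ℕ) = d by omega, qBinom_self, mul_one] at hsum
        exact hsum
      · intro j' _ hj'
        have hj'le : (j' : ℕ) ≤ d := Nat.lt_succ_iff.mp j'.isLt
        rcases lt_or_gt_of_ne (show (j' : ℕ) ≠ (j : ℕ) from fun e => hj' (Fin.ext e)) with hlt | hgt
        · rw [qBinom_eq_zero q (by omega), mul_zero]
        · rw [IH (d - (j' : ℕ)) (by omega) (by omega) j' (by omega), zero_mul]
      · intro hmem; exact absurd (Finset.mem_univ _) hmem
  funext j
  have hjle : (j : ℕ) ≤ d := Nat.lt_succ_iff.mp j.isLt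
  have := aux (d - (j : ℕ)) (by omega) j (by omega)
  simpa using this

end Aux

/-- The `d + 1` shifted `q`-binomial functions `n ↦ B(n + j, d)`, `j = 0, …, d`, form a
basis of the space of Gaussian polynomial functions of degree at most `d`: each lies in
the space, they are linearly independent, and every member of the space is a unique
`F`-linear combination of them. -/
theorem shifted_qBinom_basis {F : Type*} [Field F] (q : F) (d : ℕ) :
    (∀ j : Fin (d + 1), Dfull q d (fun n => qBinom q (n + (j : ℕ)) d) = 0) ∧
    LinearIndependent F (fun (j : Fin (d + 1)) => (fun n => qBinom q (n + (j : ℕ)) d : ℕ → F)) ∧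
    ∀ f : ℕ → F, Dfull q d f = 0 →
      ∃! c : Fin (d + 1) → F, f = ∑ j : Fin (d + 1), c j • (fun n => qBinom q (n + (j : ℕ)) d) := by
  have hker : ∀ j : Fin (d + 1), Dfull q d (fun n => qBinom q (n + (j : ℕ)) d) = 0 :=
    fun j => Dfull_shiftj q d (j : ℕ) _ (Dfull_qBinom q d)
  -- evaluation of linear combinations
  have heval : ∀ (c : Fin (d + 1) → F) (n : ℕ),
      (∑ j : Fin (d + 1), c j • (fun m => qBinom q (m + (j : ℕ)) d : ℕ → F)) n
        = ∑ j : Fin (d + 1), c j * qBinom q (n + (j : ℕ)) d := by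
    intro c n
    rw [Finset.sum_apply]
    simp [smul_eq_mul]
  -- key reformulated: if a linear combination vanishes as a function, coefficients vanish
  have key' : ∀ c : Fin (d + 1) → F,
      (∑ j : Fin (d + 1), c j • (fun m => qBinom q (m + (j : ℕ)) d : ℕ → F)) = 0 → c = 0 := by
    intro c hc
    apply key q d c
    intro i
    have := congrFun hc (i : ℕ)
    rw [heval] at this
    simp only [Pi.zero_apply] at this
    simpa [add_comm] using this
  refine ⟨hker, ?_, ?_⟩
  · rw [Fintype.linearIndependent_iff]
    intro g hg j
    have := key' g hg
    rw [this]; rfl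
  · intro f hf
    -- build the matrix and solve
    set M : Matrix (Fin (d + 1)) (Fin (d + 1)) F :=
      Matrix.of (fun i j => qBinom q ((i : ℕ) + (j : ℕ)) d) with hM
    have hinj : Function.Injective M.mulVecLin := by
      intro a b hab
      have h0 : M.mulVecLin (a - b) = 0 := by rw [map_sub, hab, sub_self]
      have hk : a - b = 0 := by
        apply key q d
        intro i
        have := congrFun h0 i
        simp only [Matrix.mulVecLin_apply, Matrix.mulVec, dotProduct,
          Pi.zero_apply, hM, Matrix.of_apply] at this
        simpa [mul_comm] using this
      exact sub_eq_zero.mp hk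
    have hsurj : Function.Surjective M.mulVecLin :=
      LinearMap.injective_iff_surjective.mp hinj
    obtain ⟨c, hc⟩ := hsurj (fun i : Fin (d + 1) => f (i : ℕ))
    set g : ℕ → F := ∑ j : Fin (d + 1), c j • (fun n => qBinom q (n + (j : ℕ)) d) with hg
    have hgker : Dfull q d g = 0 := by
      have : DL q d g = ∑ j : Fin (d + 1), c j • DL q d (fun n => qBinom q (n + (j : ℕ)) d) := by
        rw [hg, map_sum]
        simp_rw [map_smul]
      rw [DL_apply] at this
      rw [this]
      simp only [DL_apply]
      simp [hker]
    have hvals : ∀ i : ℕ, i ≤ d → g i = f i := by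
      intro i hi
      have := congrFun hc ⟨i, by omega⟩
      simp only [Matrix.mulVecLin_apply, Matrix.mulVec, dotProduct,
        hM, Matrix.of_apply] at this
      rw [hg, heval]
      rw [← this]
      apply Finset.sum_congr rfl
      intro j _
      rw [mul_comm]
    have hfg : f = g := by
      have hsub : Dfull q d (f - g) = 0 := by
        have : DL q d (f - g) = DL q d f - DL q d g := map_sub _ _ _
        rw [DL_apply, DL_apply, DL_apply, hf, hgker, sub_zero] at this
        exact this
      have := kernel_zero q d (f - g) hsub (by
        intro i hi
        simp [hvals i hi])
      have h2 : f - g = 0 := this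
      funext n
      have := congrFun h2 n
      simpa [sub_eq_zero] using this
    refine ⟨c, by rw [hfg, hg], ?_⟩
    intro c' hc'
    have hdiff : (∑ j : Fin (d + 1), (c' - c) j • (fun n => qBinom q (n + (j : ℕ)) d : ℕ → F)) = 0 := by
      have : ∀ j : Fin (d + 1), (c' - c) j • (fun n => qBinom q (n + (j : ℕ)) d : ℕ → F)
          = c' j • (fun n => qBinom q (n + (j : ℕ)) d : ℕ → F)
            - c j • (fun n => qBinom q (n + (j : ℕ)) d : ℕ → F) := by
        intro j; rw [Pi.sub_apply, sub_smul]
      simp_rw [this]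
      rw [Finset.sum_sub_distrib, ← hc', hg] at *
      rw [← hc']
      rw [hfg, hg]
      exact sub_self _
    have := key' _ hdiff
    exact sub_eq_zero.mp this
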